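/- Let H be an n×n real unreduced lower Hessenberg matrix. H is diagonalizable over the reals if and only if all eigenvalues of H are real and distinct. -/

import Mathlib

open Polynomial Matrix

/-- Entry of a matrix viewed with natural-number (0-based) indices; `0` out of range. -/
def entryR {n : ℕ} (H : Matrix (Fin n) (Fin n) ℝ) (i j : ℕ) : ℝ :=
  if h : i < n ∧ j < n then H ⟨i, h.1⟩ ⟨j, h.2⟩ else 0

/-- `H` is an unreduced lower Hessenberg matrix: entries above the superdiagonal vanish
and the superdiagonal entries are nonzero. -/
def IsUnreducedLowerHessenberg {n : ℕ} (H : Matrix (Fin n) (Fin n) ℝ) : Prop :=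
  (∀ i j : ℕ, i + 1 < j → entryR H i j = 0) ∧
  (∀ i : ℕ, i + 1 < n → entryR H i (i + 1) ≠ 0)

/-- `q` is the polynomial sequence associated with the unreduced lower Hessenberg matrix `H`:
`q 0 = 1` and `h_{i,i+1} q_{i+1} = X q_i - ∑_{j ≤ i} h_{i j} q_j` (0-based indices),
with the convention that the superdiagonal entry of the last row is `1`. -/
def IsAssocPolySeq {n : ℕ} (H : Matrix (Fin n) (Fin n) ℝ) (q : ℕ → Polynomial ℝ) : Prop :=
  q 0 = 1 ∧
  ∀ i : ℕ, i < n →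
    Polynomial.C (if i + 1 = n then 1 else entryR H i (i + 1)) * q (i + 1) =
      Polynomial.X * q i - ∑ j ∈ Finset.range (i + 1), Polynomial.C (entryR H i j) * q j

/-- `H` is diagonalizable over the reals. -/
def RealDiagonalizable {n : ℕ} (H : Matrix (Fin n) (Fin n) ℝ) : Prop :=
  ∃ P D : Matrix (Fin n) (Fin n) ℝ, IsUnit P.det ∧ D.IsDiag ∧ H = P * D * P⁻¹

/-- kernel uniqueness lemma -/
lemma hess_ker {n : ℕ} {H : Matrix (Fin n) (Fin n) ℝ} (hH : IsUnreducedLowerHessenberg H)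
    {μ : ℝ} {x : Fin n → ℝ} (hx : H.mulVec x = μ • x)
    (h0 : ∀ h : 0 < n, x ⟨0, h⟩ = 0) : x = 0 := by
  have key : ∀ k, ∀ hk : k < n, x ⟨k, hk⟩ = 0 := by
    intro k
    induction k using Nat.strong_induction_on with
    | _ k IH =>
      match k with
      | 0 => exact fun hk => h0 hk
      | Nat.succ m =>
        intro hk
        have hm : m < n := Nat.lt_of_succ_lt hk
        have hrow : ∑ j, H ⟨m, hm⟩ j * x j = μ * x ⟨m, hm⟩ := by
          simpa [Matrix.mulVec, dotProduct] using congrFun hx ⟨m, hm⟩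
        have hxm : x ⟨m, hm⟩ = 0 := IH m (Nat.lt_succ_self m) hm
        have hsum : ∑ j, H ⟨m, hm⟩ j * x j = H ⟨m, hm⟩ ⟨m + 1, hk⟩ * x ⟨m + 1, hk⟩ := by
          refine Finset.sum_eq_single _ (fun b _ hb => ?_) (fun h => absurd (Finset.mem_univ _) h)
          rcases lt_or_gt_of_ne (fun hv : (b : ℕ) = m + 1 => hb (Fin.ext hv)) with hlt | hgt
          · have hxb : x ⟨(b : ℕ), b.isLt⟩ = 0 := IH b hlt b.isLt
            rw [Fin.eta] at hxb
            rw [hxb, mul_zero]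
          · have hz : entryR H m b = 0 := hH.1 m b hgt
            rw [entryR, dif_pos ⟨hm, b.isLt⟩] at hz
            simp only [Fin.eta] at hz
            rw [hz, zero_mul]
        have hne : H ⟨m, hm⟩ ⟨m + 1, hk⟩ ≠ 0 := by
          have := hH.2 m hk
          rwa [entryR, dif_pos ⟨hm, hk⟩] at this
        have : H ⟨m, hm⟩ ⟨m + 1, hk⟩ * x ⟨m + 1, hk⟩ = 0 := by
          rw [← hsum, hrow, hxm, mul_zero]
        exact (mul_eq_zero.mp this).resolve_left hne
  funext i
  exact key i.1 i.2

lemma eval_charpoly_eq (H : Matrix (Fin n) (Fin n) ℝ) (μ : ℝ) :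
    H.charpoly.eval μ = (Matrix.scalar (Fin n) μ - H).det := by
  rw [Matrix.charpoly, eval_det, matPolyEquiv_charmatrix]
  simp

/-- a root of the characteristic polynomial has an eigenvector -/
lemma exists_eigvec {H : Matrix (Fin n) (Fin n) ℝ} {μ : ℝ}
    (h : H.charpoly.IsRoot μ) : ∃ v : Fin n → ℝ, v ≠ 0 ∧ H.mulVec v = μ • v := by
  have hdet : (Matrix.scalar (Fin n) μ - H).det = 0 := by
    rw [← eval_charpoly_eq]; exact h
  obtain ⟨v, hv0, hv⟩ := (Matrix.exists_mulVec_eq_zero_iff).mpr hdet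
  refine ⟨v, hv0, ?_⟩
  have : (Matrix.scalar (Fin n) μ).mulVec v - H.mulVec v = 0 := by
    rw [← Matrix.sub_mulVec]; exact hv
  have hscal : (Matrix.scalar (Fin n) μ).mulVec v = μ • v := by
    funext i
    simp [Matrix.scalar_apply, Matrix.mulVec_diagonal]
  rw [hscal, sub_eq_zero] at this
  exact this.symm
  
lemma charpoly_conj (P M : Matrix (Fin n) (Fin n) ℝ) (hP : IsUnit P.det) :
    (P * M * P⁻¹).charpoly = M.charpoly := by
  have h1 : P * P⁻¹ = 1 := Matrix.mul_nonsing_inv P hP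
  have hc : charmatrix (P * M * P⁻¹) =
      (C : ℝ →+* ℝ[X]).mapMatrix P * charmatrix M * (C : ℝ →+* ℝ[X]).mapMatrix P⁻¹ := by
    rw [charmatrix, charmatrix, mul_sub, sub_mul, _root_.map_mul, _root_.map_mul]
    congr 1
    have hcomm : Matrix.scalar (Fin n) (X : ℝ[X]) * (C : ℝ →+* ℝ[X]).mapMatrix P⁻¹ =
        (C : ℝ →+* ℝ[X]).mapMatrix P⁻¹ * Matrix.scalar (Fin n) (X : ℝ[X]) := by
      exact (Matrix.scalar_commute _ (fun r => Commute.all _ r) _)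
    rw [mul_assoc, hcomm, ← mul_assoc, ← _root_.map_mul, h1, _root_.map_one, one_mul]
  have h2 : ((C : ℝ →+* ℝ[X]).mapMatrix P).det * ((C : ℝ →+* ℝ[X]).mapMatrix P⁻¹).det = 1 := by
    rw [← Matrix.det_mul, ← _root_.map_mul, h1, _root_.map_one, Matrix.det_one]
  rw [Matrix.charpoly, Matrix.charpoly, hc, Matrix.det_mul, Matrix.det_mul]
  calc ((C : ℝ →+* ℝ[X]).mapMatrix P).det * M.charmatrix.det * ((C : ℝ →+* ℝ[X]).mapMatrix P⁻¹).det
      = ((C : ℝ →+* ℝ[X]).mapMatrix P).det * ((C : ℝ →+* ℝ[X]).mapMatrix P⁻¹).det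
        * M.charmatrix.det := by ring
    _ = M.charmatrix.det := by rw [h2, one_mul]

lemma charpoly_diag_roots (d : Fin n → ℝ) :
    (Matrix.diagonal d).charpoly.roots = Multiset.map d Finset.univ.val := by
  have h1 : (Matrix.diagonal d).charpoly = ∏ i, (X - C (d i)) := by
    rw [Matrix.charpoly]
    have : charmatrix (Matrix.diagonal d) = Matrix.diagonal (fun i => X - C (d i)) := by
      ext i j
      by_cases h : i = j
      · subst h; simp [charmatrix_apply, Matrix.diagonal_apply_eq]
      · simp [charmatrix_apply_ne _ _ _ h, Matrix.diagonal_apply_ne _ h]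
    rw [this, Matrix.det_diagonal]
  rw [h1]
  have : (∏ i, (X - C (d i))) =
      (Multiset.map (fun a => X - C a) (Multiset.map d Finset.univ.val)).prod := by
    rw [Multiset.map_map]; rfl
  rw [this, roots_multiset_prod_X_sub_C]

/-- forward direction: injectivity of the diagonal -/
lemma diag_injective_aux {n : ℕ} {H P D : Matrix (Fin n) (Fin n) ℝ} (hH : IsUnreducedLowerHessenberg H)
    (hP : IsUnit P.det) (hD : D.IsDiag) (hHeq : H = P * D * P⁻¹) :
    Function.Injective D.diag := by
  intro i j hij
  by_contra hne
  have h0 : 0 < n := i.pos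
  have hPinj : ∀ x : Fin n → ℝ, P.mulVec x = 0 → x = 0 := by
    intro x hx
    have := congrArg (fun y => P⁻¹.mulVec y) hx
    simpa [Matrix.mulVec_mulVec, Matrix.nonsing_inv_mul P hP] using this
  have hDd : D = Matrix.diagonal D.diag := hD.diagonal_diag.symm
  set d := D.diag with hd
  -- eigenvectors
  have hev : ∀ k : Fin n, H.mulVec (P.mulVec (Pi.single k 1)) = d k • P.mulVec (Pi.single k 1) := by
    intro k
    have hsingle : (Pi.single k (d k) : Fin n → ℝ) = d k • (Pi.single k 1 : Fin n → ℝ) := by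
      funext l
      simp [Pi.single_apply, mul_ite]
    rw [hHeq, Matrix.mulVec_mulVec, Matrix.mul_assoc (P * D), Matrix.nonsing_inv_mul P hP,
      Matrix.mul_one, ← Matrix.mulVec_mulVec, hDd, Matrix.diagonal_mulVec_single, mul_one,
      hsingle, Matrix.mulVec_smul]
  set vi := P.mulVec (Pi.single i 1) with hvi
  set vj := P.mulVec (Pi.single j 1) with hvj
  have hvine : vi ≠ 0 := by
    intro h
    have := hPinj _ h
    have := congrFun this i
    simp [Pi.single_eq_same] at this
  have ha : vi ⟨0, h0⟩ ≠ 0 := by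
    intro h
    exact hvine (hess_ker hH (hev i) (fun _ => h))
  set c := vj ⟨0, h0⟩ / vi ⟨0, h0⟩ with hc
  have hw : vj - c • vi = 0 := by
    apply hess_ker hH (μ := d i)
    · rw [Matrix.mulVec_sub, Matrix.mulVec_smul, hev i, hev j, hij, smul_sub,
        smul_comm c (d j) vi]
    · intro _
      simp only [Pi.sub_apply, Pi.smul_apply, smul_eq_mul, hc]
      field_simp
      ring
  have : (Pi.single j 1 : Fin n → ℝ) - c • (Pi.single i 1 : Fin n → ℝ) = (0 : Fin n → ℝ) := by
    apply hPinj
    rw [Matrix.mulVec_sub, Matrix.mulVec_smul, ← hvi, ← hvj]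
    exact hw
  have h1 := congrFun this j
  rw [Pi.sub_apply, Pi.smul_apply, Pi.single_eq_same,
    Pi.single_eq_of_ne (fun h : j = i => hne (h.symm)), smul_eq_mul, mul_zero, sub_zero] at h1
  exact one_ne_zero h1

lemma backward_aux {n : ℕ} {H : Matrix (Fin n) (Fin n) ℝ}
    (hcard : (Matrix.charpoly H).roots.toFinset.card = n) :
    ∃ P D : Matrix (Fin n) (Fin n) ℝ, IsUnit P.det ∧ D.IsDiag ∧ H = P * D * P⁻¹ := by
  classical
  rcases Nat.eq_zero_or_pos n with hn | hn
  · subst hn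
    exact ⟨1, 0, by simp, Matrix.isDiag_zero, Subsingleton.elim _ _⟩
  haveI : NeZero n := ⟨hn.ne'⟩
  set s := (Matrix.charpoly H).roots.toFinset with hs
  set μ : Fin n → ℝ := fun i => (s.orderIsoOfFin hcard i : ℝ) with hμ
  have hμinj : Function.Injective μ := fun a b hab => by
    have := (s.orderIsoOfFin hcard).injective (Subtype.ext hab)
    exact this
  have hroot : ∀ i, (Matrix.charpoly H).IsRoot (μ i) := by
    intro i
    have hmem : μ i ∈ s := (s.orderIsoOfFin hcard i).2
    rw [hs, Multiset.mem_toFinset, Polynomial.mem_roots'] at hmem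
    exact hmem.2
  choose v hv0 hveq using fun i => exists_eigvec (hroot i)
  have hev : ∀ i, Module.End.HasEigenvector (Matrix.toLin' H) (μ i) (v i) := by
    intro i
    refine ⟨Module.End.mem_eigenspace_iff.mpr ?_, hv0 i⟩
    rw [Matrix.toLin'_apply]
    exact hveq i
  have li : LinearIndependent ℝ v :=
    Module.End.eigenvectors_linearIndependent' (Matrix.toLin' H) μ hμinj v hev
  have hdim : Fintype.card (Fin n) = Module.finrank ℝ (Fin n → ℝ) := by
    simp [Module.finrank_fin_fun]
  set b : Module.Basis (Fin n) ℝ (Fin n → ℝ) := basisOfLinearIndependentOfCardEqFinrank li hdim with hb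
  have hbv : ⇑b = v := coe_basisOfLinearIndependentOfCardEqFinrank li hdim
  set pb : Module.Basis (Fin n) ℝ (Fin n → ℝ) := Pi.basisFun ℝ (Fin n) with hpb
  set P : Matrix (Fin n) (Fin n) ℝ := pb.toMatrix b with hP
  have hPinv : Invertible P := pb.invertibleToMatrix b
  have hPunit : IsUnit P.det := P.isUnit_det_of_invertible
  have hPinvEq : P⁻¹ = b.toMatrix pb := Matrix.inv_eq_right_inv (pb.toMatrix_mul_toMatrix_flip b)
  have hDiag : LinearMap.toMatrix b b (Matrix.toLin' H) = Matrix.diagonal μ := by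
    ext i j
    rw [LinearMap.toMatrix_apply]
    have : b j = v j := by rw [hbv]
    rw [this, Matrix.toLin'_apply, hveq j, _root_.map_smul, ← this]
    rw [Module.Basis.repr_self]
    by_cases h : i = j
    · subst h; simp [Matrix.diagonal_apply_eq]
    · simp [Matrix.diagonal_apply_ne _ h, Finsupp.single_apply, Ne.symm h, h]
  refine ⟨P, Matrix.diagonal μ, hPunit, Matrix.isDiag_diagonal μ, ?_⟩
  have key := basis_toMatrix_mul_linearMap_toMatrix_mul_basis_toMatrix
    (b := pb) (b' := b) (c := pb) (c' := b) (f := Matrix.toLin' H)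
  rw [hDiag] at key
  rw [← hPinvEq] at key
  rw [LinearMap.toMatrix_eq_toMatrix', LinearMap.toMatrix'_toLin'] at key
  exact key.symm


/-- an unreduced lower Hessenberg matrix is real diagonalizable iff all
its eigenvalues are real and distinct, i.e. iff its (monic, degree `n`) characteristic
polynomial has `n` distinct real roots. -/
theorem realDiagonalizable_iff_distinct_real_eigenvalues {n : ℕ}
    (H : Matrix (Fin n) (Fin n) ℝ) (hH : IsUnreducedLowerHessenberg H) :
    RealDiagonalizable H ↔ (Matrix.charpoly H).roots.toFinset.card = n := by
  constructor
  · rintro ⟨P, D, hP, hD, hHeq⟩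
    have hinj : Function.Injective D.diag := diag_injective_aux hH hP hD hHeq
    have hDd : D = Matrix.diagonal D.diag := hD.diagonal_diag.symm
    have hcp : H.charpoly = (Matrix.diagonal D.diag).charpoly := by
      rw [hHeq, charpoly_conj P D hP]
      exact congrArg Matrix.charpoly hDd
    rw [hcp, charpoly_diag_roots]
    have hnodup : (Multiset.map D.diag Finset.univ.val).Nodup :=
      Finset.univ.nodup.map hinj
    rw [Multiset.toFinset_card_eq_card_iff_nodup.mpr hnodup, Multiset.card_map]
    simp
  · intro hcard
    exact backward_aux hcard
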